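/- Let X be a finite set of positive integers of size 2λ with alternating difference pattern (s₁, …, s_λ), all elements at most 2tm−1, and let ι be the involution x ↦ 4tm − x. Then X ∪ ι(X) has size 4λ and alternating difference pattern (s₁, …, s_λ, s_λ, …, s₁); in particular X ∪ ι(X) is balanced. -/

import Mathlib

/-- The `i`-th entry (0-indexed) of the alternating difference pattern of a finite
set `D` of integers. -/
def adp (D : Finset ℤ) (i : ℕ) : ℤ :=
  (D.sort (· ≤ ·)).getD (2 * i + 1) 0 - (D.sort (· ≤ ·)).getD (2 * i) 0

/-- A set `D` of `2k` positive integers is balanced if for some `τ ∈ [1,k]`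
the first `τ` entries of the alternating difference pattern sum to the same
value as the remaining `k − τ` entries. -/
def IsBalancedSet (k : ℕ) (D : Finset ℤ) : Prop :=
  ∃ τ, 1 ≤ τ ∧ τ ≤ k ∧
    ∑ i ∈ Finset.range τ, adp D i = ∑ i ∈ Finset.Ico τ k, adp D i

/-- If `X ⊆ [1, 2tm−1]` has size `2λ` and alternating difference pattern
`(s₁, …, s_λ)`, and `ι(x) = 4tm − x`, then `X ∪ ι(X)` has size `4λ` and
alternating difference pattern `(s₁, …, s_λ, s_λ, …, s₁)`; in particular
`X ∪ ι(X)` is balanced. -/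
theorem stmt8 (t m : ℤ) (ht : 0 < t) (hm : 0 < m) (lam : ℕ) (hlam : 0 < lam)
    (X : Finset ℤ) (hcard : X.card = 2 * lam)
    (hsub : X ⊆ Finset.Icc 1 (2 * t * m - 1))
    (s : ℕ → ℤ) (hs : ∀ i < lam, adp X i = s i) :
    (X ∪ X.image (fun x => 4 * t * m - x)).card = 4 * lam ∧
    (∀ i < lam, adp (X ∪ X.image (fun x => 4 * t * m - x)) i = s i) ∧
    (∀ i < lam, adp (X ∪ X.image (fun x => 4 * t * m - x)) (lam + i) = s (lam - 1 - i)) ∧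
    IsBalancedSet (2 * lam) (X ∪ X.image (fun x => 4 * t * m - x)) := by
  have htm : 1 ≤ t * m := by nlinarith
  set f : ℤ → ℤ := fun x => 4 * t * m - x with hf
  have hfinj : Function.Injective f := by
    intro a b h
    simp only [hf] at h
    linarith
  have hXbd : ∀ x ∈ X, 1 ≤ x ∧ x ≤ 2 * t * m - 1 := fun x hx => Finset.mem_Icc.mp (hsub hx)
  set L : List ℤ := X.sort (· ≤ ·) with hL
  have hLlen : L.length = 2 * lam := by rw [hL, Finset.length_sort, hcard]
  have hLmem : ∀ x ∈ L, 1 ≤ x ∧ x ≤ 2 * t * m - 1 := by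
    intro x hx
    exact hXbd x ((Finset.mem_sort _).mp hx)
  set M : List ℤ := L ++ (L.map f).reverse with hM
  have hdisj : Disjoint X (X.image f) := by
    rw [Finset.disjoint_left]
    intro a ha hb
    obtain ⟨b, hb', rfl⟩ := Finset.mem_image.mp hb
    have h1 := hXbd _ ha
    have h2 := hXbd _ hb'
    simp only [hf] at h1
    linarith [h1.2, h2.2]
  -- The sort of the union is M
  have hMnodup : M.Nodup := by
    refine List.Nodup.append (Finset.sort_nodup _ _) ?_ ?_
    · exact (List.nodup_reverse).mpr ((List.nodup_map_iff hfinj).mpr (Finset.sort_nodup _ _))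
    · intro a ha hb
      rw [List.mem_reverse, List.mem_map] at hb
      obtain ⟨b, hb', rfl⟩ := hb
      have h1 := hLmem _ ha
      have h2 := hLmem _ hb'
      simp only [hf] at h1
      linarith [h1.2, h2.2]
  have hMsorted : M.Pairwise (· ≤ ·) := by
    rw [hM, List.pairwise_append]
    refine ⟨Finset.pairwise_sort _ _, ?_, ?_⟩
    · rw [List.pairwise_reverse]
      rw [List.pairwise_map]
      exact List.Pairwise.imp (fun {a b} (h : a ≤ b) => by simp only [hf]; linarith) (Finset.pairwise_sort X (· ≤ ·))
    · intro a ha b hb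
      rw [List.mem_reverse, List.mem_map] at hb
      obtain ⟨c, hc, rfl⟩ := hb
      have h1 := hLmem _ ha
      have h2 := hLmem _ hc
      simp only [hf]
      linarith [h1.2, h2.2]
  have hsortY : (X ∪ X.image f).sort (· ≤ ·) = M := by
    refine List.Perm.eq_of_pairwise' (Finset.pairwise_sort _ _) hMsorted ?_
    refine List.perm_of_nodup_nodup_toFinset_eq (Finset.sort_nodup _ _) hMnodup ?_
    ext a
    simp only [hM, List.toFinset_append, Finset.mem_union, List.mem_toFinset,
      List.mem_reverse, List.mem_map, Finset.mem_sort, Finset.mem_union, Finset.mem_image, hL]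
  have hMlen : M.length = 4 * lam := by
    simp only [hM, List.length_append, List.length_reverse, List.length_map, hLlen]
    omega
  have hget1 : ∀ n < 2 * lam, M.getD n 0 = L.getD n 0 := by
    intro n hn
    exact List.getD_append _ _ _ _ (by omega)
  have hget2 : ∀ n, 2 * lam ≤ n → n < 4 * lam → M.getD n 0 = f (L.getD (4 * lam - 1 - n) 0) := by
    intro n h1 h2
    rw [hM, List.getD_append_right _ _ _ _ (by omega)]
    have hlt : n - L.length < (L.map f).reverse.length := by
      simp only [List.length_reverse, List.length_map]; omega
    rw [List.getD_eq_getElem _ _ hlt, List.getElem_reverse]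
    rw [List.getElem_map]
    congr 1
    rw [List.getD_eq_getElem _ _ (by have h3 : (L.map f).length = L.length := List.length_map _; omega)]
    congr 1
    simp only [List.length_map] at *
    omega
  have hcard4 : (X ∪ X.image f).card = 4 * lam := by
    rw [Finset.card_union_of_disjoint hdisj, Finset.card_image_of_injective _ hfinj, hcard]
    ring
  have part2 : ∀ i < lam, adp (X ∪ X.image f) i = s i := by
    intro i hi
    rw [← hs i hi]
    unfold adp
    rw [hsortY, hget1 _ (by omega), hget1 _ (by omega)]
  have part3 : ∀ i < lam, adp (X ∪ X.image f) (lam + i) = s (lam - 1 - i) := by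
    intro i hi
    rw [← hs (lam - 1 - i) (by omega)]
    unfold adp
    rw [hsortY, hget2 _ (by omega) (by omega), hget2 _ (by omega) (by omega)]
    have e1 : 4 * lam - 1 - (2 * (lam + i) + 1) = 2 * (lam - 1 - i) := by omega
    have e2 : 4 * lam - 1 - 2 * (lam + i) = 2 * (lam - 1 - i) + 1 := by omega
    rw [e1, e2]
    simp only [hf]
    ring
  refine ⟨hcard4, part2, part3, lam, hlam, by omega, ?_⟩
  have hleft : ∑ i ∈ Finset.range lam, adp (X ∪ X.image f) i = ∑ i ∈ Finset.range lam, s i :=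
    Finset.sum_congr rfl fun i hi => part2 i (Finset.mem_range.mp hi)
  have hright : ∑ i ∈ Finset.Ico lam (2 * lam), adp (X ∪ X.image f) i
      = ∑ i ∈ Finset.range lam, s i := by
    rw [show 2 * lam = lam + lam by ring, Finset.sum_Ico_eq_sum_range]
    simp only [Nat.add_sub_cancel_left]
    calc ∑ i ∈ Finset.range lam, adp (X ∪ X.image f) (lam + i)
        = ∑ i ∈ Finset.range lam, s (lam - 1 - i) :=
          Finset.sum_congr rfl fun i hi => part3 i (Finset.mem_range.mp hi)
      _ = ∑ i ∈ Finset.range lam, s i := Finset.sum_range_reflect s lam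
  rw [hleft, hright]
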